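/- Let N ∈ ℕ and let μ = μ₁ × ⋯ × μ_N and ν = ν₁ × ⋯ × ν_N be finite product probability measures on a product of N measurable spaces. Then 1 − exp(−(1/2) Σ_{n=1}^N d_TV(μ_n, ν_n)²) ≤ d_TV(μ, ν) ≤ Σ_{n=1}^N d_TV(μ_n, ν_n). -/

import Mathlib

open MeasureTheory

/-- Total variation distance between two measures:
`sup_{A measurable} |μ(A) − ν(A)|`. -/
noncomputable def tvDist {𝒴 : Type*} [MeasurableSpace 𝒴] (μ ν : Measure 𝒴) : ℝ :=
  ⨆ A : {A : Set 𝒴 // MeasurableSet A}, |(μ A.1).toReal - (ν A.1).toReal|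


open Real ENNReal

section tvAux

section enn
open ENNReal

lemma enn_sq (x : ℝ≥0∞) : (x * x) ^ (1/2:ℝ) = x := by
  rw [show x * x = x ^ (2:ℝ) by rw [ENNReal.rpow_two]; ring, ← ENNReal.rpow_mul]
  norm_num

lemma enn_min_le_sqrt (x y : ℝ≥0∞) : min x y ≤ (x*y)^(1/2:ℝ) := by
  have h1 : min x y * min x y ≤ x * y := mul_le_mul' (min_le_left _ _) (min_le_right _ _)
  calc min x y = (min x y * min x y) ^ (1/2:ℝ) := (enn_sq _).symm
  _ ≤ (x*y)^(1/2:ℝ) := ENNReal.rpow_le_rpow h1 (by norm_num)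

lemma enn_sqrt_le_add (x y : ℝ≥0∞) : (x*y)^(1/2:ℝ) ≤ x + y := by
  have h1 : x * y ≤ max x y * max x y := mul_le_mul' (le_max_left _ _) (le_max_right _ _)
  calc (x*y)^(1/2:ℝ) ≤ (max x y * max x y)^(1/2:ℝ) := ENNReal.rpow_le_rpow h1 (by norm_num)
  _ = max x y := enn_sq _
  _ ≤ x + y := max_le (le_self_add) (le_add_self)

lemma enn_sqrt_mul (a b c d : ℝ≥0∞) :
    ((a*c)*(b*d))^(1/2:ℝ) = (a*b)^(1/2:ℝ)*(c*d)^(1/2:ℝ) := by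
  rw [← ENNReal.mul_rpow_of_nonneg _ _ (by norm_num : (0:ℝ) ≤ 1/2)]
  ring_nf

lemma one_sub_sum_le_prod {ι : Type*} (s : Finset ι) (x : ι → ℝ)
    (h0 : ∀ i ∈ s, 0 ≤ x i) (h1 : ∀ i ∈ s, x i ≤ 1) :
    1 - ∑ i ∈ s, x i ≤ ∏ i ∈ s, (1 - x i) := by
  induction s using Finset.cons_induction with
  | empty => simp
  | cons a s ha ih =>
    rw [Finset.sum_cons, Finset.prod_cons]
    have hprod0 : 0 ≤ ∏ i ∈ s, (1 - x i) :=
      Finset.prod_nonneg fun i hi => by linarith [h1 i (Finset.mem_cons_of_mem hi)]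
    have hprod1 : ∏ i ∈ s, (1 - x i) ≤ 1 :=
      Finset.prod_le_one (fun i hi => by linarith [h1 i (Finset.mem_cons_of_mem hi)])
        (fun i hi => by linarith [h0 i (Finset.mem_cons_of_mem hi)])
    have ihs := ih (fun i hi => h0 i (Finset.mem_cons_of_mem hi))
      (fun i hi => h1 i (Finset.mem_cons_of_mem hi))
    have hx0 := h0 a (Finset.mem_cons_self a s)
    have hx1 := h1 a (Finset.mem_cons_self a s)
    nlinarith
end enn


variable {α β : Type*} [MeasurableSpace α] [MeasurableSpace β]

lemma map_withDensity_equiv (e : α ≃ᵐ β) (Λ : Measure α) {F : α → ℝ≥0∞} (hF : Measurable F) :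
    Measure.map e (Λ.withDensity F) = (Measure.map e Λ).withDensity (F ∘ e.symm) := by
  ext s hs
  rw [Measure.map_apply e.measurable hs, withDensity_apply _ hs,
    withDensity_apply _ (e.measurable hs),
    setLIntegral_map hs (hF.comp e.symm.measurable) e.measurable]
  refine setLIntegral_congr_fun (e.measurable hs) ?_
  intro x _
  simp

lemma withDensity_prod (Λ₁ : Measure α) (Λ₂ : Measure β)
    [SigmaFinite Λ₁] [SigmaFinite Λ₂] {f₁ : α → ℝ≥0∞} {f₂ : β → ℝ≥0∞}
    [SigmaFinite (Λ₁.withDensity f₁)] [SigmaFinite (Λ₂.withDensity f₂)]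
    (h₁ : Measurable f₁) (h₂ : Measurable f₂) :
    (Λ₁.withDensity f₁).prod (Λ₂.withDensity f₂)
      = (Λ₁.prod Λ₂).withDensity (fun p => f₁ p.1 * f₂ p.2) := by
  refine Measure.prod_eq fun s t hs ht => ?_
  rw [withDensity_apply _ (hs.prod ht), ← Measure.prod_restrict,
    lintegral_prod_mul h₁.aemeasurable h₂.aemeasurable,
    withDensity_apply _ hs, withDensity_apply _ ht]

lemma withDensity_univ (Λ : Measure α) (F : α → ℝ≥0∞) :
    Λ.withDensity F Set.univ = ∫⁻ x, F x ∂Λ := by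
  rw [withDensity_apply _ MeasurableSet.univ, setLIntegral_univ]


variable {α : Type*} [MeasurableSpace α] {Λ : Measure α} {F G : α → ℝ≥0∞}

lemma wd_univ_one [IsProbabilityMeasure (Λ.withDensity F)] : ∫⁻ x, F x ∂Λ = 1 := by
  rw [← setLIntegral_univ, ← withDensity_apply _ MeasurableSet.univ]
  exact measure_univ

lemma lintegral_min_le_one [IsProbabilityMeasure (Λ.withDensity F)] :
    ∫⁻ x, min (F x) (G x) ∂Λ ≤ 1 := by
  calc ∫⁻ x, min (F x) (G x) ∂Λ ≤ ∫⁻ x, F x ∂Λ := lintegral_mono fun x => min_le_left _ _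
  _ = 1 := wd_univ_one

lemma tv_key (hF : Measurable F) (hG : Measurable G)
    [IsProbabilityMeasure (Λ.withDensity F)] [IsProbabilityMeasure (Λ.withDensity G)]
    {A : Set α} (hA : MeasurableSet A) :
    ((Λ.withDensity F) A).toReal - ((Λ.withDensity G) A).toReal
      ≤ 1 - (∫⁻ x, min (F x) (G x) ∂Λ).toReal := by
  set m := ∫⁻ x, min (F x) (G x) ∂Λ with hm
  have hm1 : m ≤ 1 := lintegral_min_le_one
  have claim : (Λ.withDensity F) A + m ≤ 1 + (Λ.withDensity G) A := by
    have h1 : ∫⁻ x in Aᶜ, min (F x) (G x) ∂Λ ≤ ∫⁻ x in Aᶜ, F x ∂Λ :=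
      lintegral_mono fun x => min_le_left _ _
    have h2 : ∫⁻ x in A, min (F x) (G x) ∂Λ ≤ (Λ.withDensity G) A := by
      rw [withDensity_apply _ hA]; exact lintegral_mono fun x => min_le_right _ _
    calc (Λ.withDensity F) A + m
        = (∫⁻ x in A, F x ∂Λ) +
            ((∫⁻ x in A, min (F x) (G x) ∂Λ) + ∫⁻ x in Aᶜ, min (F x) (G x) ∂Λ) := by
          rw [withDensity_apply _ hA, lintegral_add_compl _ hA]
      _ ≤ (∫⁻ x in A, F x ∂Λ) + ((Λ.withDensity G) A + ∫⁻ x in Aᶜ, F x ∂Λ) :=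
          add_le_add le_rfl (add_le_add h2 h1)
      _ = ((∫⁻ x in A, F x ∂Λ) + ∫⁻ x in Aᶜ, F x ∂Λ) + (Λ.withDensity G) A := by ring
      _ = 1 + (Λ.withDensity G) A := by rw [lintegral_add_compl _ hA, wd_univ_one]
  have hmt : m ≠ ⊤ := (hm1.trans_lt one_lt_top).ne
  have e1 : ((Λ.withDensity F) A + m).toReal = ((Λ.withDensity F) A).toReal + m.toReal :=
    ENNReal.toReal_add (measure_ne_top _ _) hmt
  have e2 : (1 + (Λ.withDensity G) A).toReal = 1 + ((Λ.withDensity G) A).toReal := by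
    rw [ENNReal.toReal_add one_ne_top (measure_ne_top _ _), ENNReal.toReal_one]
  have := ENNReal.toReal_mono (by simp [measure_ne_top]) claim
  rw [e1, e2] at this
  linarith

lemma tv_master (hF : Measurable F) (hG : Measurable G)
    [IsProbabilityMeasure (Λ.withDensity F)] [IsProbabilityMeasure (Λ.withDensity G)] :
    tvDist (Λ.withDensity F) (Λ.withDensity G) = 1 - (∫⁻ x, min (F x) (G x) ∂Λ).toReal := by
  set m := ∫⁻ x, min (F x) (G x) ∂Λ with hm
  have hm1 : m ≤ 1 := lintegral_min_le_one
  have key : ∀ A : {A : Set α // MeasurableSet A},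
      |((Λ.withDensity F) A.1).toReal - ((Λ.withDensity G) A.1).toReal| ≤ 1 - m.toReal := by
    intro A
    rw [abs_sub_le_iff]
    constructor
    · exact tv_key hF hG A.2
    · have := tv_key hG hF (Λ := Λ) A.2
      simpa [min_comm] using this
  rw [tvDist]
  apply le_antisymm
  · exact ciSup_le key
  · set A₀ := {x | G x < F x} with hA₀def
    have hA₀ : MeasurableSet A₀ := measurableSet_lt hG hF
    have hsplit : m = (Λ.withDensity G) A₀ + (Λ.withDensity F) A₀ᶜ := by
      rw [hm, withDensity_apply _ hA₀, withDensity_apply _ hA₀.compl,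
        ← lintegral_add_compl (fun x => min (F x) (G x)) hA₀]
      congr 1
      · exact setLIntegral_congr_fun hA₀ (fun x (hx : G x < F x) => min_eq_right hx.le)
      · exact setLIntegral_congr_fun hA₀.compl (fun x (hx : ¬ G x < F x) => min_eq_left (not_lt.mp hx))
    have hc : (Λ.withDensity F) A₀ᶜ = 1 - (Λ.withDensity F) A₀ := prob_compl_eq_one_sub hA₀
    have hmt : m.toReal = ((Λ.withDensity G) A₀).toReal + (1 - ((Λ.withDensity F) A₀).toReal) := by
      rw [hsplit, hc, ENNReal.toReal_add (measure_ne_top _ _)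
        ((tsub_le_self.trans_lt one_lt_top).ne),
        ENNReal.toReal_sub_of_le prob_le_one one_ne_top, ENNReal.toReal_one]
    have hm1' : m.toReal ≤ 1 := by
      have := ENNReal.toReal_mono one_ne_top hm1; simpa using this
    have hval : |((Λ.withDensity F) A₀).toReal - ((Λ.withDensity G) A₀).toReal| = 1 - m.toReal := by
      rw [abs_of_nonneg (by linarith)]
      linarith
    calc 1 - m.toReal
        = |((Λ.withDensity F) A₀).toReal - ((Λ.withDensity G) A₀).toReal| := hval.symm
      _ ≤ _ := by
          have hbdd : BddAbove (Set.range fun A : {A : Set α // MeasurableSet A} =>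
              |((Λ.withDensity F) A.1).toReal - ((Λ.withDensity G) A.1).toReal|) :=
            ⟨1 - m.toReal, by rintro _ ⟨A, rfl⟩; exact key A⟩
          exact le_ciSup hbdd ⟨A₀, hA₀⟩

lemma ptwise_amgm (t s r : ℝ) (ht : 0 < t) (hs : 0 ≤ s) (hr : 0 ≤ r) :
    2*t*(s^2 + r^2 - 2*min (s^2) (r^2))
      ≤ t^2*(s^2 + r^2 - 2*(s*r)) + (s^2 + r^2 + 2*(s*r)) := by
  rcases le_total s r with h|h
  · rw [min_eq_left (by nlinarith)]
    nlinarith [sq_nonneg (t*(r-s) - (r+s))]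
  · rw [min_eq_right (by nlinarith)]
    nlinarith [sq_nonneg (t*(s-r) - (s+r))]

lemma aff_exp {α : Type*} [MeasurableSpace α] {Λ : Measure α} {F G : α → ℝ≥0∞}
    (hF : Measurable F) (hG : Measurable G)
    [IsProbabilityMeasure (Λ.withDensity F)] [IsProbabilityMeasure (Λ.withDensity G)]
    (hFt : ∀ᵐ x ∂Λ, F x < ⊤) (hGt : ∀ᵐ x ∂Λ, G x < ⊤) :
    (∫⁻ x, (F x * G x)^(1/2:ℝ) ∂Λ).toReal
      ≤ Real.exp (-(tvDist (Λ.withDensity F) (Λ.withDensity G))^2 / 2) := by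
  have hSmeas : Measurable fun x => (F x * G x)^(1/2:ℝ) := (hF.mul hG).pow_const _
  have hSfin : ∫⁻ x, (F x * G x)^(1/2:ℝ) ∂Λ ≠ ⊤ := by
    refine ((lintegral_mono fun x => enn_sqrt_le_add (F x) (G x)).trans_lt ?_).ne
    rw [lintegral_add_left hF, wd_univ_one, wd_univ_one (F := G)]
    simp
  have hmfin : ∫⁻ x, min (F x) (G x) ∂Λ ≠ ⊤ :=
    ((lintegral_min_le_one (F := F) (G := G)).trans_lt one_lt_top).ne
  set a := (∫⁻ x, (F x * G x)^(1/2:ℝ) ∂Λ).toReal with ha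
  set tv := tvDist (Λ.withDensity F) (Λ.withDensity G) with htvdef
  have htv : tv = 1 - (∫⁻ x, min (F x) (G x) ∂Λ).toReal := tv_master hF hG
  set m' := (∫⁻ x, min (F x) (G x) ∂Λ).toReal with hm'
  -- real-valued integrands
  have intF : Integrable (fun x => (F x).toReal) Λ :=
    integrable_toReal_of_lintegral_ne_top hF.aemeasurable (by rw [wd_univ_one]; exact one_ne_top)
  have intG : Integrable (fun x => (G x).toReal) Λ :=
    integrable_toReal_of_lintegral_ne_top hG.aemeasurable (by rw [wd_univ_one]; exact one_ne_top)
  have intS : Integrable (fun x => ((F x * G x)^(1/2:ℝ)).toReal) Λ :=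
    integrable_toReal_of_lintegral_ne_top hSmeas.aemeasurable hSfin
  have intmin : Integrable (fun x => (min (F x) (G x)).toReal) Λ :=
    integrable_toReal_of_lintegral_ne_top (hF.min hG).aemeasurable hmfin
  have iF : ∫ x, (F x).toReal ∂Λ = 1 := by
    rw [integral_toReal hF.aemeasurable hFt, wd_univ_one, ENNReal.toReal_one]
  have iG : ∫ x, (G x).toReal ∂Λ = 1 := by
    rw [integral_toReal hG.aemeasurable hGt, wd_univ_one, ENNReal.toReal_one]
  have iS : ∫ x, ((F x * G x)^(1/2:ℝ)).toReal ∂Λ = a := by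
    rw [integral_toReal hSmeas.aemeasurable]
    filter_upwards [hFt, hGt] with x h1 h2
    exact ENNReal.rpow_lt_top_of_nonneg (by norm_num) (ENNReal.mul_ne_top h1.ne h2.ne)
  have imin : ∫ x, (min (F x) (G x)).toReal ∂Λ = m' := by
    rw [integral_toReal (hF.min hG).aemeasurable]
    filter_upwards [hFt] with x h1
    exact lt_of_le_of_lt (min_le_left _ _) h1
  have hS_eq : ∀ᵐ x ∂Λ, ((F x * G x)^(1/2:ℝ)).toReal
      = Real.sqrt ((F x).toReal) * Real.sqrt ((G x).toReal) := by
    filter_upwards [hFt, hGt] with x h1 h2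
    rw [← ENNReal.toReal_rpow, ENNReal.toReal_mul, ← Real.sqrt_eq_rpow,
      Real.sqrt_mul ENNReal.toReal_nonneg]
  have intFG : Integrable (fun x => (F x).toReal + (G x).toReal) Λ := intF.add intG
  have iFG : ∫ x, ((F x).toReal + (G x).toReal) ∂Λ = 2 := by
    rw [integral_add intF intG, iF, iG]; norm_num
  -- a ≤ 1
  have ha0 : 0 ≤ a := ENNReal.toReal_nonneg
  have ha1 : a ≤ 1 := by
    have intFGh : Integrable (fun x => ((F x).toReal + (G x).toReal)/2) Λ :=
      intFG.div_const 2
    have hle : ∀ᵐ x ∂Λ, ((F x * G x)^(1/2:ℝ)).toReal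
        ≤ ((F x).toReal + (G x).toReal)/2 := by
      filter_upwards [hS_eq] with x hx
      rw [hx]
      nlinarith [sq_nonneg (Real.sqrt ((F x).toReal) - Real.sqrt ((G x).toReal)),
        Real.sq_sqrt (ENNReal.toReal_nonneg (a := F x)),
        Real.sq_sqrt (ENNReal.toReal_nonneg (a := G x))]
    have hmono := integral_mono_ae intS intFGh hle
    have ed : ∫ x, ((F x).toReal + (G x).toReal)/2 ∂Λ = 1 := by
      rw [integral_div, iFG]; norm_num
    rw [iS, ed] at hmono
    linarith
  -- key inequality for all t > 0
  have key : ∀ t : ℝ, 0 < t → 2*t*(1 + 1 - 2*m') ≤ t^2*(1 + 1 - 2*a) + (1 + 1 + 2*a) := by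
    intro t ht
    have intmin2 : Integrable (fun x => 2*(min (F x) (G x)).toReal) Λ := intmin.const_mul 2
    have intS2 : Integrable (fun x => 2*((F x * G x)^(1/2:ℝ)).toReal) Λ := intS.const_mul 2
    have intL0 : Integrable (fun x => (F x).toReal + (G x).toReal
        - 2*(min (F x) (G x)).toReal) Λ := intFG.sub intmin2
    have intL : Integrable (fun x => 2*t*((F x).toReal + (G x).toReal
        - 2*(min (F x) (G x)).toReal)) Λ := intL0.const_mul (2*t)
    have intR1 : Integrable (fun x => (F x).toReal + (G x).toReal
        - 2*((F x * G x)^(1/2:ℝ)).toReal) Λ := intFG.sub intS2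
    have intR1' : Integrable (fun x => t^2*((F x).toReal + (G x).toReal
        - 2*((F x * G x)^(1/2:ℝ)).toReal)) Λ := intR1.const_mul (t^2)
    have intR2 : Integrable (fun x => (F x).toReal + (G x).toReal
        + 2*((F x * G x)^(1/2:ℝ)).toReal) Λ := intFG.add intS2
    have intR : Integrable (fun x => t^2*((F x).toReal + (G x).toReal
        - 2*((F x * G x)^(1/2:ℝ)).toReal)
        + ((F x).toReal + (G x).toReal + 2*((F x * G x)^(1/2:ℝ)).toReal)) Λ :=
      intR1'.add intR2
    have hpt : ∀ᵐ x ∂Λ, 2*t*((F x).toReal + (G x).toReal - 2*(min (F x) (G x)).toReal)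
        ≤ t^2*((F x).toReal + (G x).toReal - 2*((F x * G x)^(1/2:ℝ)).toReal)
          + ((F x).toReal + (G x).toReal + 2*((F x * G x)^(1/2:ℝ)).toReal) := by
      filter_upwards [hFt, hGt, hS_eq] with x h1 h2 hx
      have e1 : (F x).toReal = (Real.sqrt ((F x).toReal))^2 :=
        (Real.sq_sqrt ENNReal.toReal_nonneg).symm
      have e2 : (G x).toReal = (Real.sqrt ((G x).toReal))^2 :=
        (Real.sq_sqrt ENNReal.toReal_nonneg).symm
      have e3 : (min (F x) (G x)).toReal
          = min ((Real.sqrt ((F x).toReal))^2) ((Real.sqrt ((G x).toReal))^2) := by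
        rw [ENNReal.toReal_min h1.ne h2.ne, ← e1, ← e2]
      rw [e3, hx]
      nth_rewrite 1 [e1, e2]
      nth_rewrite 3 [e1, e2]
      nth_rewrite 5 [e1, e2]
      exact ptwise_amgm t _ _ ht (Real.sqrt_nonneg _) (Real.sqrt_nonneg _)
    have hmono := integral_mono_ae intL intR hpt
    have imin2 : ∫ x, 2*(min (F x) (G x)).toReal ∂Λ = 2*m' := by
      rw [integral_const_mul, imin]
    have iS2 : ∫ x, 2*((F x * G x)^(1/2:ℝ)).toReal ∂Λ = 2*a := by
      rw [integral_const_mul, iS]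
    have eL : ∫ x, 2*t*((F x).toReal + (G x).toReal - 2*(min (F x) (G x)).toReal) ∂Λ
        = 2*t*(1 + 1 - 2*m') := by
      rw [integral_const_mul, integral_sub intFG intmin2, iFG, imin2]; ring
    have eR : ∫ x, (t^2*((F x).toReal + (G x).toReal - 2*((F x * G x)^(1/2:ℝ)).toReal)
        + ((F x).toReal + (G x).toReal + 2*((F x * G x)^(1/2:ℝ)).toReal)) ∂Λ
        = t^2*(1 + 1 - 2*a) + (1 + 1 + 2*a) := by
      rw [integral_add intR1' intR2, integral_const_mul, integral_sub intFG intS2,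
        integral_add intFG intS2, iFG, iS2]; ring
    rw [eL, eR] at hmono
    exact hmono
  -- bounds
  have hm'0 : 0 ≤ m' := ENNReal.toReal_nonneg
  have hm'1 : m' ≤ 1 := by
    have := ENNReal.toReal_mono one_ne_top (lintegral_min_le_one (Λ := Λ) (F := F) (G := G))
    simpa [← hm'] using this
  have htv0 : 0 ≤ tv := by rw [htv]; linarith
  have htv1 : tv ≤ 1 := by rw [htv]; linarith
  have hm'tv : m' = 1 - tv := by rw [htv]; ring
  -- tv^2 ≤ 1 - a^2
  have hsq : tv^2 ≤ 1 - a^2 := by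
    rcases eq_or_lt_of_le htv0 with h0|h0
    · nlinarith
    rcases lt_or_eq_of_le ha1 with ha'|ha'
    · have h1a : 0 < 1 - a := by linarith
      have ht' : 0 < tv/(1-a) := div_pos h0 h1a
      have h := key _ ht'
      rw [hm'tv] at h
      have e1 : 2*(tv/(1-a))*(1 + 1 - 2*(1-tv)) = 4*(tv^2/(1-a)) := by
        field_simp; ring
      have e2 : (tv/(1-a))^2*(1 + 1 - 2*a) + (1 + 1 + 2*a)
          = 2*(tv^2/(1-a)) + (1 + 1 + 2*a) := by
        field_simp; ring
      rw [e1, e2] at h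
      have h3 : tv^2/(1-a) ≤ 1 + a := by linarith
      have h4 : tv^2 ≤ (1+a)*(1-a) := (div_le_iff₀ h1a).mp h3
      nlinarith
    · exfalso
      have htvne : tv ≠ 0 := ne_of_gt h0
      have ht' : 0 < 2/tv := by positivity
      have h := key _ ht'
      rw [hm'tv, ha'] at h
      have e1 : 2*(2/tv)*(1 + 1 - 2*(1-tv)) = 8 := by field_simp; ring
      rw [e1] at h
      nlinarith
  -- conclude
  have h3 : a^2 ≤ Real.exp (-(tv^2)) := by
    have := Real.add_one_le_exp (-(tv^2))
    nlinarith
  have h4 : (Real.exp (-tv^2/2))^2 = Real.exp (-(tv^2)) := by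
    rw [pow_two, ← Real.exp_add]; ring_nf
  calc a = Real.sqrt (a^2) := (Real.sqrt_sq ha0).symm
  _ ≤ Real.sqrt ((Real.exp (-tv^2/2))^2) := Real.sqrt_le_sqrt (by rw [h4]; exact h3)
  _ = Real.exp (-tv^2/2) := Real.sqrt_sq (Real.exp_nonneg _)

noncomputable def mAff {α : Type*} [MeasurableSpace α] (μ ν : Measure α) : ℝ≥0∞ :=
  ∫⁻ x, min (μ.rnDeriv (μ+ν) x) (ν.rnDeriv (μ+ν) x) ∂(μ+ν)

noncomputable def sAff {α : Type*} [MeasurableSpace α] (μ ν : Measure α) : ℝ≥0∞ :=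
  ∫⁻ x, (μ.rnDeriv (μ+ν) x * ν.rnDeriv (μ+ν) x)^(1/2:ℝ) ∂(μ+ν)

lemma coord {α : Type*} [MeasurableSpace α] (μ ν : Measure α)
    [IsProbabilityMeasure μ] [IsProbabilityMeasure ν] :
    tvDist μ ν = 1 - (mAff μ ν).toReal
      ∧ (sAff μ ν).toReal ≤ Real.exp (-(tvDist μ ν)^2/2)
      ∧ mAff μ ν ≤ 1 ∧ sAff μ ν ≠ ⊤ := by
  have hac1 : μ ≪ μ + ν := Measure.absolutelyContinuous_of_le (Measure.le_add_right le_rfl)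
  have hac2 : ν ≪ μ + ν := Measure.absolutelyContinuous_of_le (Measure.le_add_left le_rfl)
  have hwf : (μ+ν).withDensity (μ.rnDeriv (μ+ν)) = μ :=
    Measure.withDensity_rnDeriv_eq _ _ hac1
  have hwg : (μ+ν).withDensity (ν.rnDeriv (μ+ν)) = ν :=
    Measure.withDensity_rnDeriv_eq _ _ hac2
  have hfm : Measurable (μ.rnDeriv (μ+ν)) := Measure.measurable_rnDeriv _ _
  have hgm : Measurable (ν.rnDeriv (μ+ν)) := Measure.measurable_rnDeriv _ _
  haveI i1 : IsProbabilityMeasure ((μ+ν).withDensity (μ.rnDeriv (μ+ν))) := by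
    rw [hwf]; infer_instance
  haveI i2 : IsProbabilityMeasure ((μ+ν).withDensity (ν.rnDeriv (μ+ν))) := by
    rw [hwg]; infer_instance
  have htveq : tvDist μ ν
      = tvDist ((μ+ν).withDensity (μ.rnDeriv (μ+ν))) ((μ+ν).withDensity (ν.rnDeriv (μ+ν))) := by
    rw [hwf, hwg]
  refine ⟨?_, ?_, ?_, ?_⟩
  · rw [htveq, tv_master hfm hgm]; rfl
  · rw [htveq]
    exact aff_exp hfm hgm (Measure.rnDeriv_lt_top _ _) (Measure.rnDeriv_lt_top _ _)
  · exact lintegral_min_le_one (Λ := μ+ν)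
  · refine ((lintegral_mono fun x => enn_sqrt_le_add _ _).trans_lt ?_).ne
    rw [lintegral_add_left hfm, wd_univ_one, wd_univ_one (F := ν.rnDeriv (μ+ν))]
    simp

universe u

theorem pi_rep (N : ℕ) : ∀ {𝒴 : Fin N → Type u} [inst : ∀ n, MeasurableSpace (𝒴 n)]
    (μ ν : ∀ n, Measure (𝒴 n)) [∀ n, IsProbabilityMeasure (μ n)]
    [∀ n, IsProbabilityMeasure (ν n)],
    ∃ (Λ : Measure (∀ n, 𝒴 n)) (F G : (∀ n, 𝒴 n) → ℝ≥0∞),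
      Measurable F ∧ Measurable G ∧ IsFiniteMeasure Λ ∧
      Λ.withDensity F = Measure.pi μ ∧ Λ.withDensity G = Measure.pi ν ∧
      (∏ n, mAff (μ n) (ν n)) ≤ ∫⁻ x, min (F x) (G x) ∂Λ ∧
      (∫⁻ x, (F x * G x)^(1/2:ℝ) ∂Λ) ≤ ∏ n, sAff (μ n) (ν n) := by
  induction N with
  | zero =>
    intro 𝒴 inst μ ν iμ iν
    refine ⟨Measure.pi μ, 1, 1, measurable_const, measurable_const,
      inferInstance, ?_, ?_, ?_, ?_⟩
    · exact withDensity_one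
    · rw [withDensity_one]
      refine (Measure.pi_eq fun s _ => ?_).symm
      have huniv : Set.univ.pi s = Set.univ := by ext x; simp
      simp [huniv]
    · simp [lintegral_one]
    · simp [lintegral_one]
  | succ n ih =>
    intro 𝒴 inst μ ν iμ iν
    set e := MeasurableEquiv.piFinSuccAbove 𝒴 0 with he
    have mpμ := measurePreserving_piFinSuccAbove μ 0
    have mpν := measurePreserving_piFinSuccAbove ν 0
    set μ' : ∀ i : Fin n, Measure (𝒴 ((0 : Fin (n+1)).succAbove i)) :=
      fun i => μ ((0 : Fin (n+1)).succAbove i) with hμ'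
    set ν' : ∀ i : Fin n, Measure (𝒴 ((0 : Fin (n+1)).succAbove i)) :=
      fun i => ν ((0 : Fin (n+1)).succAbove i) with hν'
    obtain ⟨Λt, Ft, Gt, hFtm, hGtm, hΛtfin, hwFt, hwGt, hmint, hsqt⟩ := ih μ' ν'
    -- head representation
    set l0 := μ 0 + ν 0 with hl0
    set f₀ := (μ 0).rnDeriv l0 with hf₀
    set g₀ := (ν 0).rnDeriv l0 with hg₀
    have hf₀m : Measurable f₀ := Measure.measurable_rnDeriv _ _
    have hg₀m : Measurable g₀ := Measure.measurable_rnDeriv _ _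
    have hwf₀ : l0.withDensity f₀ = μ 0 :=
      Measure.withDensity_rnDeriv_eq _ _
        (Measure.absolutelyContinuous_of_le (Measure.le_add_right le_rfl))
    have hwg₀ : l0.withDensity g₀ = ν 0 :=
      Measure.withDensity_rnDeriv_eq _ _
        (Measure.absolutelyContinuous_of_le (Measure.le_add_left le_rfl))
    haveI : SigmaFinite (l0.withDensity f₀) := by rw [hwf₀]; infer_instance
    haveI : SigmaFinite (l0.withDensity g₀) := by rw [hwg₀]; infer_instance
    haveI : SigmaFinite (Λt.withDensity Ft) := by rw [hwFt]; infer_instance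
    haveI : SigmaFinite (Λt.withDensity Gt) := by rw [hwGt]; infer_instance
    set Λp := l0.prod Λt with hΛp
    set Fp : 𝒴 0 × (∀ i : Fin n, 𝒴 ((0 : Fin (n+1)).succAbove i)) → ℝ≥0∞ :=
      fun p => f₀ p.1 * Ft p.2 with hFp
    set Gp : 𝒴 0 × (∀ i : Fin n, 𝒴 ((0 : Fin (n+1)).succAbove i)) → ℝ≥0∞ :=
      fun p => g₀ p.1 * Gt p.2 with hGp
    have hFpm : Measurable Fp := (hf₀m.comp measurable_fst).mul (hFtm.comp measurable_snd)
    have hGpm : Measurable Gp := (hg₀m.comp measurable_fst).mul (hGtm.comp measurable_snd)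
    have hwFp : Λp.withDensity Fp = (μ 0).prod (Measure.pi μ') := by
      rw [← hwf₀, ← hwFt, withDensity_prod l0 Λt hf₀m hFtm]
    have hwGp : Λp.withDensity Gp = (ν 0).prod (Measure.pi ν') := by
      rw [← hwg₀, ← hwGt, withDensity_prod l0 Λt hg₀m hGtm]
    refine ⟨Measure.map e.symm Λp, Fp ∘ e, Gp ∘ e,
      hFpm.comp e.measurable, hGpm.comp e.measurable, ?_, ?_, ?_, ?_, ?_⟩
    · constructor
      rw [Measure.map_apply e.symm.measurable MeasurableSet.univ]
      simpa using measure_lt_top Λp _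
    · calc (Measure.map e.symm Λp).withDensity (Fp ∘ e)
          = Measure.map e.symm (Λp.withDensity Fp) := by
            rw [map_withDensity_equiv e.symm Λp hFpm, MeasurableEquiv.symm_symm]
        _ = Measure.pi μ := by rw [hwFp]; exact (mpμ.symm e).map_eq
    · calc (Measure.map e.symm Λp).withDensity (Gp ∘ e)
          = Measure.map e.symm (Λp.withDensity Gp) := by
            rw [map_withDensity_equiv e.symm Λp hGpm, MeasurableEquiv.symm_symm]
        _ = Measure.pi ν := by rw [hwGp]; exact (mpν.symm e).map_eq
    · have htrans : ∫⁻ x, min ((Fp ∘ e) x) ((Gp ∘ e) x) ∂(Measure.map e.symm Λp)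
          = ∫⁻ p, min (Fp p) (Gp p) ∂Λp := by
        rw [lintegral_map_equiv (fun x => min ((Fp ∘ e) x) ((Gp ∘ e) x)) e.symm]
        simp only [Function.comp_apply, MeasurableEquiv.apply_symm_apply]
      rw [htrans]
      have hptwise : ∫⁻ p, (min (f₀ p.1) (g₀ p.1)) * (min (Ft p.2) (Gt p.2)) ∂Λp
          ≤ ∫⁻ p, min (Fp p) (Gp p) ∂Λp := by
        refine lintegral_mono fun p => le_min ?_ ?_
        · exact mul_le_mul' (min_le_left _ _) (min_le_left _ _)
        · exact mul_le_mul' (min_le_right _ _) (min_le_right _ _)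
      refine le_trans ?_ hptwise
      rw [lintegral_prod_mul (hf₀m.min hg₀m).aemeasurable (hFtm.min hGtm).aemeasurable]
      have hhead : mAff (μ 0) (ν 0) = ∫⁻ x, min (f₀ x) (g₀ x) ∂l0 := rfl
      have hprodeq : ∏ m : Fin (n+1), mAff (μ m) (ν m)
          = mAff (μ 0) (ν 0) * ∏ i : Fin n, mAff (μ' i) (ν' i) := by
        rw [Fin.prod_univ_succ]
        rfl
      rw [hprodeq, hhead]
      exact mul_le_mul' le_rfl hmint
    · have htrans : ∫⁻ x, ((Fp ∘ e) x * (Gp ∘ e) x)^(1/2:ℝ) ∂(Measure.map e.symm Λp)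
          = ∫⁻ p, (Fp p * Gp p)^(1/2:ℝ) ∂Λp := by
        rw [lintegral_map_equiv (fun x => ((Fp ∘ e) x * (Gp ∘ e) x)^(1/2:ℝ)) e.symm]
        simp only [Function.comp_apply, MeasurableEquiv.apply_symm_apply]
      rw [htrans]
      have hsplit : ∫⁻ p, (Fp p * Gp p)^(1/2:ℝ) ∂Λp
          = ∫⁻ p, (f₀ p.1 * g₀ p.1)^(1/2:ℝ) * (Ft p.2 * Gt p.2)^(1/2:ℝ) ∂Λp := by
        refine lintegral_congr fun p => ?_
        rw [hFp, hGp]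
        exact enn_sqrt_mul _ _ _ _
      rw [hsplit, lintegral_prod_mul
        (show Measurable fun x => (f₀ x * g₀ x)^(1/2:ℝ) from (hf₀m.mul hg₀m).pow_const _).aemeasurable
        (show Measurable fun x => (Ft x * Gt x)^(1/2:ℝ) from (hFtm.mul hGtm).pow_const _).aemeasurable]
      have hhead : sAff (μ 0) (ν 0) = ∫⁻ x, (f₀ x * g₀ x)^(1/2:ℝ) ∂l0 := rfl
      have hprodeq : ∏ m : Fin (n+1), sAff (μ m) (ν m)
          = sAff (μ 0) (ν 0) * ∏ i : Fin n, sAff (μ' i) (ν' i) := by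
        rw [Fin.prod_univ_succ]
        rfl
      rw [hprodeq, ← hhead]
      exact mul_le_mul' le_rfl hsqt

end tvAux

/-- for finite product probability measures `μ = μ₁ × ⋯ × μ_N` and
`ν = ν₁ × ⋯ × ν_N`,
`1 − exp(−(1/2) Σₙ d_TV(μₙ,νₙ)²) ≤ d_TV(μ,ν) ≤ Σₙ d_TV(μₙ,νₙ)`. -/
theorem stmt16
    {N : ℕ} {𝒴 : Fin N → Type*} [∀ n, MeasurableSpace (𝒴 n)]
    (μ ν : ∀ n, Measure (𝒴 n))
    [∀ n, IsProbabilityMeasure (μ n)] [∀ n, IsProbabilityMeasure (ν n)] :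
    1 - Real.exp (-(1 / 2) * ∑ n : Fin N, tvDist (μ n) (ν n) ^ 2)
        ≤ tvDist (Measure.pi μ) (Measure.pi ν)
      ∧ tvDist (Measure.pi μ) (Measure.pi ν) ≤ ∑ n : Fin N, tvDist (μ n) (ν n) := by
  obtain ⟨Λ, F, G, hFm, hGm, hfin, hwF, hwG, hmin, hsq⟩ := pi_rep N μ ν
  haveI : IsProbabilityMeasure (Λ.withDensity F) := by rw [hwF]; infer_instance
  haveI : IsProbabilityMeasure (Λ.withDensity G) := by rw [hwG]; infer_instance
  have hmaster : tvDist (Measure.pi μ) (Measure.pi ν)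
      = 1 - (∫⁻ x, min (F x) (G x) ∂Λ).toReal := by
    rw [← hwF, ← hwG]; exact tv_master hFm hGm
  have hco := fun n => coord (μ n) (ν n)
  have hmAff1 : ∀ n, (mAff (μ n) (ν n)).toReal ≤ 1 := by
    intro n
    have := ENNReal.toReal_mono one_ne_top (hco n).2.2.1
    simpa using this
  have htveq : ∀ n, (mAff (μ n) (ν n)).toReal = 1 - tvDist (μ n) (ν n) := by
    intro n
    have := (hco n).1
    linarith
  have htv0 : ∀ n, 0 ≤ tvDist (μ n) (ν n) := by
    intro n
    have := (hco n).1
    have := hmAff1 n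
    linarith
  have htv1 : ∀ n, tvDist (μ n) (ν n) ≤ 1 := by
    intro n
    have := (hco n).1
    have : (0:ℝ) ≤ (mAff (μ n) (ν n)).toReal := ENNReal.toReal_nonneg
    linarith [(hco n).1]
  have hMfin : ∫⁻ x, min (F x) (G x) ∂Λ ≠ ⊤ :=
    ((lintegral_min_le_one (Λ := Λ) (F := F) (G := G)).trans_lt one_lt_top).ne
  have hSprodfin : ∏ n, sAff (μ n) (ν n) ≠ ⊤ :=
    (ENNReal.prod_lt_top fun n _ => (hco n).2.2.2.lt_top).ne
  have hSfin : ∫⁻ x, (F x * G x)^(1/2:ℝ) ∂Λ ≠ ⊤ := (hsq.trans_lt hSprodfin.lt_top).ne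
  constructor
  · -- lower bound
    rw [hmaster]
    have hA : (∫⁻ x, min (F x) (G x) ∂Λ).toReal
        ≤ (∫⁻ x, (F x * G x)^(1/2:ℝ) ∂Λ).toReal :=
      ENNReal.toReal_mono hSfin (lintegral_mono fun x => enn_min_le_sqrt _ _)
    have hB : (∫⁻ x, (F x * G x)^(1/2:ℝ) ∂Λ).toReal ≤ ∏ n, (sAff (μ n) (ν n)).toReal := by
      rw [← ENNReal.toReal_prod]
      exact ENNReal.toReal_mono hSprodfin hsq
    have hC : ∏ n, (sAff (μ n) (ν n)).toReal
        ≤ ∏ n, Real.exp (-(tvDist (μ n) (ν n))^2/2) :=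
      Finset.prod_le_prod (fun n _ => ENNReal.toReal_nonneg) (fun n _ => (hco n).2.1)
    have hD : ∏ n, Real.exp (-(tvDist (μ n) (ν n))^2/2)
        = Real.exp (∑ n, -(tvDist (μ n) (ν n))^2/2) := (Real.exp_sum _ _).symm
    have hE : (∑ n : Fin N, -(tvDist (μ n) (ν n))^2/2)
        = -(1/2) * ∑ n : Fin N, tvDist (μ n) (ν n)^2 := by
      rw [Finset.mul_sum]
      exact Finset.sum_congr rfl fun n _ => by ring
    rw [← hE, ← hD]
    linarith
  · -- upper bound
    rw [hmaster]
    have h1 : ∏ n, (mAff (μ n) (ν n)).toReal ≤ (∫⁻ x, min (F x) (G x) ∂Λ).toReal := by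
      rw [← ENNReal.toReal_prod]
      refine ENNReal.toReal_mono hMfin hmin
    have h2 : 1 - ∑ n, tvDist (μ n) (ν n) ≤ ∏ n, (mAff (μ n) (ν n)).toReal := by
      have hw := one_sub_sum_le_prod Finset.univ (fun n => tvDist (μ n) (ν n))
        (fun n _ => htv0 n) (fun n _ => htv1 n)
      calc 1 - ∑ n, tvDist (μ n) (ν n) ≤ ∏ n, (1 - tvDist (μ n) (ν n)) := hw
      _ = ∏ n, (mAff (μ n) (ν n)).toReal := Finset.prod_congr rfl fun n _ => (htveq n).symm
    linarith
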